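/- In the polynomial ring ℂ[z₁,z₂,z₃,z₄], let I⁺ = ⟨z₄², z₂z₃ + z₁z₄, z₂² + z₂z₄⟩. Then the colon ideal I⁺ : ⟨z₂²⟩ equals the homogeneous maximal ideal 𝔪 = ⟨z₁,z₂,z₃,z₄⟩; consequently, 𝔪 is an associated prime of the module ℂ[z₁,z₂,z₃,z₄]/I⁺. -/

import Mathlib

open MvPolynomial

private lemma aux_sub_C_mem (p : MvPolynomial (Fin 4) ℂ) :
    p - C (constantCoeff p) ∈ Ideal.span (Set.range (X : Fin 4 → MvPolynomial (Fin 4) ℂ)) := by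
  induction p using MvPolynomial.induction_on with
  | C a => simp
  | add p q hp hq =>
    have := Ideal.add_mem _ hp hq
    convert this using 1
    simp only [map_add, Ideal.span]
    ring
  | mul_X p n hp =>
    have : p * X n ∈ Ideal.span (Set.range (X : Fin 4 → MvPolynomial (Fin 4) ℂ)) :=
      Ideal.mul_mem_left _ p (Ideal.subset_span ⟨n, rfl⟩)
    simpa using this

private lemma aux_span_range_X_eq_ker :
    Ideal.span (Set.range (X : Fin 4 → MvPolynomial (Fin 4) ℂ)) =
      RingHom.ker (constantCoeff : MvPolynomial (Fin 4) ℂ →+* ℂ) := by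
  apply le_antisymm
  · rw [Ideal.span_le]
    rintro _ ⟨i, rfl⟩
    simp [RingHom.mem_ker]
  · intro p hp
    rw [RingHom.mem_ker] at hp
    have := aux_sub_C_mem p
    rwa [hp, map_zero, sub_zero] at this

private lemma aux_X1sq_not_mem :
    (X 1 ^ 2 : MvPolynomial (Fin 4) ℂ) ∉
      Ideal.span {(X 3 ^ 2 : MvPolynomial (Fin 4) ℂ),
          X 1 * X 2 + X 0 * X 3, X 1 ^ 2 + X 1 * X 3} := by
  intro h
  rw [Ideal.mem_span_insert] at h
  obtain ⟨a, w, hw, heq⟩ := h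
  rw [Ideal.mem_span_insert] at hw
  obtain ⟨b, w2, hw2, heq2⟩ := hw
  rw [Ideal.mem_span_singleton'] at hw2
  obtain ⟨c, rfl⟩ := hw2
  subst heq2
  have hne : ((Finsupp.single 1 2 : Fin 4 →₀ ℕ) = Finsupp.single 1 1 + Finsupp.single 3 1)
      = False := by
    simp only [eq_iff_iff, iff_false]
    intro hcon
    have := DFunLike.congr_fun hcon 3
    simp [Finsupp.single_apply] at this
  have h1 := congrArg (coeff (Finsupp.single 1 2)) heq
  have h2 := congrArg (coeff (Finsupp.single 1 1 + Finsupp.single 3 1)) heq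
  simp [coeff_mul_X', X_pow_eq_monomial, coeff_mul_monomial', mul_add, coeff_X', ← mul_assoc,
    Finsupp.single_le_iff, Finsupp.mem_support_iff, hne] at h1 h2
  exact one_ne_zero (h1.trans h2.symm)

private lemma aux_m_le_colon :
    Ideal.span (Set.range (X : Fin 4 → MvPolynomial (Fin 4) ℂ)) ≤
      Submodule.colon
        (Ideal.span {(X 3 ^ 2 : MvPolynomial (Fin 4) ℂ),
          X 1 * X 2 + X 0 * X 3, X 1 ^ 2 + X 1 * X 3})
        (Ideal.span {(X 1 ^ 2 : MvPolynomial (Fin 4) ℂ)}) := by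
  set I : Ideal (MvPolynomial (Fin 4) ℂ) :=
    Ideal.span {(X 3 ^ 2 : MvPolynomial (Fin 4) ℂ),
      X 1 * X 2 + X 0 * X 3, X 1 ^ 2 + X 1 * X 3} with hI
  have key : ∀ p q r : MvPolynomial (Fin 4) ℂ,
      p * (X 3 ^ 2) + q * (X 1 * X 2 + X 0 * X 3) + r * (X 1 ^ 2 + X 1 * X 3) ∈ I := by
    intro p q r
    exact Ideal.add_mem _
      (Ideal.add_mem _
        (Ideal.mul_mem_left _ _ (Ideal.subset_span (by simp)))
        (Ideal.mul_mem_left _ _ (Ideal.subset_span (by simp))))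
      (Ideal.mul_mem_left _ _ (Ideal.subset_span (by simp)))
  rw [Ideal.span_le]
  rintro _ ⟨i, rfl⟩
  show X i ∈ I.colon (Ideal.span {(X 1 ^ 2 : MvPolynomial (Fin 4) ℂ)})
  rw [Ideal.mem_colon_span_singleton]
  fin_cases i
  · show (X 0 : MvPolynomial (Fin 4) ℂ) * X 1 ^ 2 ∈ I
    have := key (X 0) (-(X 1 + X 3)) (X 0 + X 2)
    convert this using 1; ring
  · show (X 1 : MvPolynomial (Fin 4) ℂ) * X 1 ^ 2 ∈ I
    have := key (X 1) 0 (X 1 - X 3)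
    convert this using 1; ring
  · show (X 2 : MvPolynomial (Fin 4) ℂ) * X 1 ^ 2 ∈ I
    have := key (X 0) (-(X 3)) (X 2)
    convert this using 1; ring
  · show (X 3 : MvPolynomial (Fin 4) ℂ) * X 1 ^ 2 ∈ I
    have := key (-(X 1)) 0 (X 3)
    convert this using 1; ring

private lemma aux_colon_eq :
    Submodule.colon
        (Ideal.span {(X 3 ^ 2 : MvPolynomial (Fin 4) ℂ),
          X 1 * X 2 + X 0 * X 3, X 1 ^ 2 + X 1 * X 3})
        (Ideal.span {(X 1 ^ 2 : MvPolynomial (Fin 4) ℂ)}) =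
      Ideal.span (Set.range (X : Fin 4 → MvPolynomial (Fin 4) ℂ)) := by
  apply le_antisymm _ aux_m_le_colon
  intro p hp
  have hp' : p * X 1 ^ 2 ∈ Ideal.span {(X 3 ^ 2 : MvPolynomial (Fin 4) ℂ),
      X 1 * X 2 + X 0 * X 3, X 1 ^ 2 + X 1 * X 3} := Ideal.mem_colon_span_singleton.mp hp
  rw [aux_span_range_X_eq_ker, RingHom.mem_ker]
  by_contra hc
  have hsub := aux_m_le_colon (aux_sub_C_mem p)
  rw [Ideal.mem_colon_span_singleton] at hsub
  have h3 : C (constantCoeff p) * X 1 ^ 2 ∈ Ideal.span {(X 3 ^ 2 : MvPolynomial (Fin 4) ℂ),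
      X 1 * X 2 + X 0 * X 3, X 1 ^ 2 + X 1 * X 3} := by
    have := Ideal.sub_mem _ hp' hsub
    convert this using 1; ring
  have h4 := Ideal.mul_mem_left _ (C (constantCoeff p)⁻¹) h3
  rw [← mul_assoc, ← C_mul, inv_mul_cancel₀ hc, C_1, one_mul] at h4
  exact aux_X1sq_not_mem h4

theorem explicit_example_colon_eq_maximal :
    Submodule.colon
        (Ideal.span {(X 3 ^ 2 : MvPolynomial (Fin 4) ℂ),
          X 1 * X 2 + X 0 * X 3, X 1 ^ 2 + X 1 * X 3})
        (Ideal.span {(X 1 ^ 2 : MvPolynomial (Fin 4) ℂ)}) =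
      Ideal.span (Set.range (X : Fin 4 → MvPolynomial (Fin 4) ℂ)) ∧
    Ideal.span (Set.range (X : Fin 4 → MvPolynomial (Fin 4) ℂ)) ∈
      associatedPrimes (MvPolynomial (Fin 4) ℂ)
        (MvPolynomial (Fin 4) ℂ ⧸
          Ideal.span {(X 3 ^ 2 : MvPolynomial (Fin 4) ℂ),
            X 1 * X 2 + X 0 * X 3, X 1 ^ 2 + X 1 * X 3}) := by
  refine ⟨aux_colon_eq, ?_, ?_⟩
  · rw [aux_span_range_X_eq_ker]
    exact RingHom.ker_isPrime _
  · refine ⟨Ideal.Quotient.mk _ (X 1 ^ 2), ?_⟩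
    have hprime : (Ideal.span (Set.range (X : Fin 4 → MvPolynomial (Fin 4) ℂ))).IsPrime := by
      rw [aux_span_range_X_eq_ker]
      exact RingHom.ker_isPrime _
    rw [← hprime.radical]
    congr 1
    ext r
    rw [Submodule.mem_colon_singleton, Submodule.mem_bot]
    have hsm : r • (Ideal.Quotient.mk (Ideal.span {(X 3 ^ 2 : MvPolynomial (Fin 4) ℂ),
        X 1 * X 2 + X 0 * X 3, X 1 ^ 2 + X 1 * X 3}) (X 1 ^ 2)) =
        Ideal.Quotient.mk _ (r * X 1 ^ 2) := rfl
    rw [hsm, Ideal.Quotient.eq_zero_iff_mem, ← Ideal.mem_colon_span_singleton, aux_colon_eq]
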